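/- The 8×8 real matrix A(x₁,x₂,x₃), defined as the block-diagonal matrix with the 4×4 identity in the upper-left block and lower-right 4×4 block [[1−2X², −2x₁X, −2x₂X, −2x₃X],[2x₁X, 1−2X², 2x₃X, −2x₂X],[2x₂X, −2x₃X, 1−2X², 2x₁X],[2x₃X, 2x₂X, −2x₁X, 1−2X²]] where X = √(1−x₁²−x₂²−x₃²), is an orthogonal matrix with determinant 1 for every (x₁,x₂,x₃) in the closed unit ball of ℝ³. -/

import Mathlib

set_option maxHeartbeats 1000000


noncomputable section

/-- The 8×8 matrix `A(x₁,x₂,x₃)` from the paper, with `X = √(1−x₁²−x₂²−x₃²)`. -/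
def matA (x₁ x₂ x₃ : ℝ) : Matrix (Fin 8) (Fin 8) ℝ :=
  let X := Real.sqrt (1 - x₁^2 - x₂^2 - x₃^2)
  Matrix.of ![
    ![1,0,0,0,0,0,0,0],
    ![0,1,0,0,0,0,0,0],
    ![0,0,1,0,0,0,0,0],
    ![0,0,0,1,0,0,0,0],
    ![0,0,0,0, 1-2*X^2, -2*x₁*X, -2*x₂*X, -2*x₃*X],
    ![0,0,0,0, 2*x₁*X, 1-2*X^2, 2*x₃*X, -2*x₂*X],
    ![0,0,0,0, 2*x₂*X, -2*x₃*X, 1-2*X^2, 2*x₁*X],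
    ![0,0,0,0, 2*x₃*X, 2*x₂*X, -2*x₁*X, 1-2*X^2]]

/-- The 8×8 matrix `B(y₁,y₂)` from the paper, with `Y = √(1−y₁²−y₂²)`. -/
def matB (y₁ y₂ : ℝ) : Matrix (Fin 8) (Fin 8) ℝ :=
  let Y := Real.sqrt (1 - y₁^2 - y₂^2)
  Matrix.of ![
    ![1,0,0,0,0,0,0,0],
    ![0,1,0,0,0,0,0,0],
    ![0,0, y₁, -y₂, -Y, 0, 0,0],
    ![0,0, y₂, y₁, 0, -Y, 0,0],
    ![0,0, Y, 0, y₁, y₂, 0,0],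
    ![0,0, 0, Y, -y₂, y₁, 0,0],
    ![0,0,0,0,0,0,1,0],
    ![0,0,0,0,0,0,0,1]]

/-- The 8×8 matrix `D(w₁,w₂)` from the paper, with `W = √(1−w₁²−w₂²)`. -/
def matD (w₁ w₂ : ℝ) : Matrix (Fin 8) (Fin 8) ℝ :=
  let W := Real.sqrt (1 - w₁^2 - w₂^2)
  Matrix.of ![
    ![w₁, -w₂, -W, 0, 0,0,0,0],
    ![w₂, w₁, 0, -W, 0,0,0,0],
    ![W, 0, w₁, w₂, 0,0,0,0],
    ![0, W, -w₂, w₁, 0,0,0,0],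
    ![0,0,0,0,1,0,0,0],
    ![0,0,0,0,0,1,0,0],
    ![0,0,0,0,0,0,1,0],
    ![0,0,0,0,0,0,0,1]]

/-- The companion matrix `D'(w₁,w₂)` from the paper. -/
def matD' (w₁ w₂ : ℝ) : Matrix (Fin 8) (Fin 8) ℝ :=
  let W := Real.sqrt (1 - w₁^2 - w₂^2)
  Matrix.of ![
    ![1,0,0,0,0,0,0,0],
    ![0,1,0,0,0,0,0,0],
    ![0,0,1,0,0,0,0,0],
    ![0,0,0,1,0,0,0,0],
    ![0,0,0,0, w₁, -w₂, W, 0],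
    ![0,0,0,0, w₂, w₁, 0, -W],
    ![0,0,0,0, -W, 0, w₁, -w₂],
    ![0,0,0,0, 0, W, w₂, w₁]]


/-- `A(x₁,x₂,x₃)` is orthogonal with determinant 1 for every point of the
closed unit ball of `ℝ³`. -/
theorem stmt_0 (x₁ x₂ x₃ : ℝ) (h : x₁^2 + x₂^2 + x₃^2 ≤ 1) :
    matA x₁ x₂ x₃ ∈ Matrix.orthogonalGroup (Fin 8) ℝ ∧ (matA x₁ x₂ x₃).det = 1 := by
  set X := Real.sqrt (1 - x₁^2 - x₂^2 - x₃^2) with hXdef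
  have hX : X ^ 2 = 1 - x₁^2 - x₂^2 - x₃^2 := Real.sq_sqrt (by linarith)
  set C : Matrix (Fin 4) (Fin 4) ℝ := Matrix.of
    ![![1-2*X^2, -2*x₁*X, -2*x₂*X, -2*x₃*X],
      ![2*x₁*X, 1-2*X^2, 2*x₃*X, -2*x₂*X],
      ![2*x₂*X, -2*x₃*X, 1-2*X^2, 2*x₁*X],
      ![2*x₃*X, 2*x₂*X, -2*x₁*X, 1-2*X^2]] with hCdef
  have hA : matA x₁ x₂ x₃ =
      (Matrix.fromBlocks 1 0 0 C).submatrix finSumFinEquiv.symm finSumFinEquiv.symm := by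
    ext i j
    fin_cases i <;> fin_cases j <;> rfl
  have hC : C * C.transpose = 1 := by
    ext i j
    rw [Matrix.mul_apply]
    simp only [Matrix.transpose_apply]
    fin_cases i <;> fin_cases j <;>
      simp [hCdef, Fin.sum_univ_succ, Matrix.one_apply] <;> nlinarith [hX]
  constructor
  · rw [Matrix.mem_orthogonalGroup_iff, ← Matrix.conjTranspose_eq_transpose_of_trivial, hA]
    rw [show ((Matrix.fromBlocks 1 0 0 C).submatrix
        (⇑finSumFinEquiv.symm) (⇑finSumFinEquiv.symm)).conjTranspose
      = ((Matrix.fromBlocks 1 0 0 C).transpose).submatrix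
        (⇑finSumFinEquiv.symm) (⇑finSumFinEquiv.symm) by
      ext i j; simp [Matrix.conjTranspose_apply]]
    rw [Matrix.submatrix_mul_equiv, Matrix.fromBlocks_transpose, Matrix.fromBlocks_multiply]
    simp [hC]
  · rw [hA, Matrix.det_submatrix_equiv_self, Matrix.det_fromBlocks_zero₂₁,
      Matrix.det_one, one_mul]
    simp only [hCdef]
    simp [Matrix.det_succ_row_zero, Fin.sum_univ_succ, Fin.succAbove,
      Fin.castSucc, Fin.castAdd, Fin.castLE]
    linear_combination (4*X^2*((1-2*X^2)^2 + 4*X^2*(x₁^2+x₂^2+x₃^2) + 1)) * hX
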